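/- Fix X_m, X_n with 0 < X_m ≤ X_n and k real. Define g(x) = √(X_n² − x²) − √(X_m² − x²) − 2kx on [0, X_m). Then g''(x) ≥ g''(0) = 1/X_m − 1/X_n for all x ∈ [0, X_m). -/

import Mathlib

open Real

lemma hasDerivAt_sqrt_sub_sq (a x : ℝ) (h : x^2 < a^2) :
    HasDerivAt (fun y : ℝ => Real.sqrt (a^2 - y^2)) (-x / Real.sqrt (a^2 - x^2)) x := by
  have hpos : 0 < a^2 - x^2 := sub_pos.mpr h
  have hs : 0 < Real.sqrt (a^2 - x^2) := Real.sqrt_pos.mpr hpos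
  have h1 : HasDerivAt (fun y : ℝ => a^2 - y^2) (-(2*x)) x := by
    simpa using ((hasDerivAt_pow 2 x).const_sub (a^2))
  have h2 := (Real.hasDerivAt_sqrt (ne_of_gt hpos)).comp x h1
  refine h2.congr_deriv (Eq.symm ?_)
  field_simp

lemma hasDerivAt_div_sqrt (a x : ℝ) (h : x^2 < a^2) :
    HasDerivAt (fun y : ℝ => y / Real.sqrt (a^2 - y^2))
      (a^2 / (Real.sqrt (a^2 - x^2))^3) x := by
  have hpos : 0 < a^2 - x^2 := sub_pos.mpr h
  have hs : 0 < Real.sqrt (a^2 - x^2) := Real.sqrt_pos.mpr hpos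
  have hsq : Real.sqrt (a^2 - x^2) ^ 2 = a^2 - x^2 := Real.sq_sqrt hpos.le
  have hd := (hasDerivAt_id x).div (hasDerivAt_sqrt_sub_sq a x h) hs.ne'
  refine hd.congr_deriv (Eq.symm ?_)
  field_simp
  simp only [id]; linear_combination (-1 : ℝ) * hsq

/-- For `0 < X_m ≤ X_n` and real `k`, the function
`g(x) = √(X_n² − x²) − √(X_m² − x²) − 2kx` satisfies
`g''(x) ≥ g''(0) = 1/X_m − 1/X_n` on `[0, X_m)`. -/
theorem phase_second_derivative_min_at_zero (Xm Xn k : ℝ)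
    (hXm : 0 < Xm) (hmn : Xm ≤ Xn) :
    let g : ℝ → ℝ := fun x => Real.sqrt (Xn^2 - x^2) - Real.sqrt (Xm^2 - x^2) - 2 * k * x
    deriv (deriv g) 0 = 1 / Xm - 1 / Xn ∧
      ∀ x ∈ Set.Ico (0:ℝ) Xm, 1 / Xm - 1 / Xn ≤ deriv (deriv g) x := by
  intro g
  have hXn : 0 < Xn := lt_of_lt_of_le hXm hmn
  have hmn2 : Xm^2 ≤ Xn^2 := by nlinarith
  have hg' : ∀ y : ℝ, y^2 < Xm^2 → HasDerivAt g
      (y / Real.sqrt (Xm^2 - y^2) - y / Real.sqrt (Xn^2 - y^2) - 2*k) y := by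
    intro y hy
    have hyn : y^2 < Xn^2 := lt_of_lt_of_le hy hmn2
    have h1 := hasDerivAt_sqrt_sub_sq Xn y hyn
    have h2 := hasDerivAt_sqrt_sub_sq Xm y hy
    have h3 : HasDerivAt (fun z : ℝ => 2*k*z) (2*k) y := by
      simpa using (hasDerivAt_id y).const_mul (2*k)
    have h4 := (h1.sub h2).sub h3
    refine h4.congr_deriv (Eq.symm ?_)
    ring
  have key : ∀ x : ℝ, x^2 < Xm^2 → deriv (deriv g) x
      = Xm^2 / (Real.sqrt (Xm^2 - x^2))^3 - Xn^2 / (Real.sqrt (Xn^2 - x^2))^3 := by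
    intro x hx
    have hxn : x^2 < Xn^2 := lt_of_lt_of_le hx hmn2
    have hU : IsOpen {y : ℝ | y^2 < Xm^2} := isOpen_lt (continuous_pow 2) continuous_const
    have hev : deriv g =ᶠ[nhds x]
        (fun y => y / Real.sqrt (Xm^2 - y^2) - y / Real.sqrt (Xn^2 - y^2) - 2*k) :=
      Filter.eventuallyEq_of_mem (hU.mem_nhds hx) (fun y hy => (hg' y hy).deriv)
    rw [hev.deriv_eq]
    exact (((hasDerivAt_div_sqrt Xm x hx).sub (hasDerivAt_div_sqrt Xn x hxn)).sub_const (2*k)).deriv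
  constructor
  · have h0 : (0:ℝ)^2 < Xm^2 := by nlinarith
    rw [key 0 h0]
    rw [show Xm^2 - (0:ℝ)^2 = Xm^2 by ring, show Xn^2 - (0:ℝ)^2 = Xn^2 by ring,
      Real.sqrt_sq hXm.le, Real.sqrt_sq hXn.le]
    field_simp
  · rintro x ⟨hx0, hxm⟩
    have hx2 : x^2 < Xm^2 := by nlinarith
    have hxn2 : x^2 < Xn^2 := lt_of_lt_of_le hx2 hmn2
    rw [key x hx2]
    set p := Real.sqrt (Xm^2 - x^2) with hp
    set q := Real.sqrt (Xn^2 - x^2) with hq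
    have hp0 : 0 < p := Real.sqrt_pos.mpr (sub_pos.mpr hx2)
    have hq0 : 0 < q := Real.sqrt_pos.mpr (sub_pos.mpr hxn2)
    have hp2 : p^2 = Xm^2 - x^2 := Real.sq_sqrt (sub_pos.mpr hx2).le
    have hq2 : q^2 = Xn^2 - x^2 := Real.sq_sqrt (sub_pos.mpr hxn2).le
    have hpXm : p ≤ Xm := by nlinarith
    have hqXn : q ≤ Xn := by nlinarith
    have hpq : p ≤ q := by nlinarith
    -- key algebraic facts
    have e3 : q^2*Xm^2 - p^2*Xn^2 = x^2*(q^2 - p^2) := by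
      linear_combination (-q^2) * hp2 + p^2 * hq2
    have hqmpn : p * Xn ≤ q * Xm := by
      nlinarith [e3, sq_nonneg x, mul_pos hq0 hXm, mul_pos hp0 hXn]
    have hA : p^2 * (Xn^2 + Xn*q + q^2) ≤ q^2 * (Xm^2 + Xm*p + p^2) := by
      have t1 : 0 ≤ x^2*(q^2 - p^2) := mul_nonneg (sq_nonneg x) (by nlinarith)
      have t2 : 0 ≤ p*q*(q*Xm - p*Xn) := mul_nonneg (by positivity) (by linarith)
      nlinarith [t1, t2, e3]
    have hB : Xm * p * (Xm + p) ≤ Xn * q * (Xn + q) := by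
      have h1 : Xm * p ≤ Xn * q := mul_le_mul hmn hpq hp0.le hXn.le
      exact mul_le_mul h1 (by linarith) (by positivity) (by positivity)
    have hC : (Xn^2 + Xn*q + q^2) * (Xm * p * (Xm + p)) * p^2
        ≤ (Xm^2 + Xm*p + p^2) * (Xn * q * (Xn + q)) * q^2 := by
      calc (Xn^2 + Xn*q + q^2) * (Xm * p * (Xm + p)) * p^2
          = (p^2 * (Xn^2 + Xn*q + q^2)) * (Xm * p * (Xm + p)) := by ring
        _ ≤ (q^2 * (Xm^2 + Xm*p + p^2)) * (Xn * q * (Xn + q)) := by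
            apply mul_le_mul hA hB (by positivity) (by positivity)
        _ = (Xm^2 + Xm*p + p^2) * (Xn * q * (Xn + q)) * q^2 := by ring
    -- goal: 1/Xm - 1/Xn ≤ Xm^2/p^3 - Xn^2/q^3
    have hG : (Xn - q) * (Xn^2 + Xn*q + q^2) * (Xm * p^3)
        ≤ (Xm - p) * (Xm^2 + Xm*p + p^2) * (Xn * q^3) := by
      have hpos : 0 < (Xm + p) * (Xn + q) := by positivity
      rw [← mul_le_mul_iff_of_pos_right hpos]
      have e1 : (Xn - q) * (Xn + q) = x^2 := by linear_combination -hq2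
      have e2 : (Xm - p) * (Xm + p) = x^2 := by linear_combination -hp2
      calc (Xn - q) * (Xn^2 + Xn*q + q^2) * (Xm * p^3) * ((Xm + p) * (Xn + q))
          = x^2 * ((Xn^2 + Xn*q + q^2) * (Xm * p * (Xm + p)) * p^2) := by
            rw [← e1]; ring
        _ ≤ x^2 * ((Xm^2 + Xm*p + p^2) * (Xn * q * (Xn + q)) * q^2) := by
            exact mul_le_mul_of_nonneg_left hC (sq_nonneg x)
        _ = (Xm - p) * (Xm^2 + Xm*p + p^2) * (Xn * q^3) * ((Xm + p) * (Xn + q)) := by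
            rw [← e2]; ring
    rw [div_sub_div _ _ (by positivity : Xm ≠ 0) (by positivity : Xn ≠ 0),
      div_sub_div _ _ (by positivity : p^3 ≠ 0) (by positivity : q^3 ≠ 0),
      div_le_div_iff₀ (by positivity) (by positivity)]
    nlinarith [hG]
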